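/- Let G be a graph, let S = {v_1, v_2, v_3, v_4} be a 4-subset of V(G), and let k_1 ≥ 5 and k_2 ≥ 2 be integers. Construct G' from G by adding k_1 − 4 new vertices â^1, …, â^{k_1−4} and, for each 1 ≤ i ≤ k_1 − 4, adding k_2 internally disjoint paths â^i a^i_j v_1 (1 ≤ j ≤ k_2) of length two through new, pairwise distinct vertices a^i_j, and let S' = S ∪ {â^1, …, â^{k_1−4}}. If G contains k_2 internally disjoint trees connecting S, then G' contains k_2 internally disjoint trees connecting S'. -/

import Mathlib

open SimpleGraph

/-- `F` is an internally disjoint family of trees connecting `S` in `G`: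
each member is a subgraph of `G` that is a tree containing all of `S`, the members are
pairwise edge-disjoint, and any two distinct members intersect exactly in `S`. -/
def IsIDTrees {V : Type*} (G : SimpleGraph V) (S : Set V) {ι : Type*} (F : ι → G.Subgraph) : Prop :=
  (∀ i, S ⊆ (F i).verts ∧ ((F i).coe).IsTree) ∧
    ∀ i j, i ≠ j → (F i).verts ∩ (F j).verts = S ∧ Disjoint (F i).edgeSet (F j).edgeSet

/-- Vertices of the graph `G'` obtained from a graph on `V` by adding `p` new vertices
`â^1, …, â^p` (`ahat i`) and, for each of them, `q` new middle vertices `a^i_j` (`mid i j`). -/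
inductive ExtVert (V : Type*) (p q : ℕ) where
  | base (v : V)
  | ahat (i : Fin p)
  | mid (i : Fin p) (j : Fin q)

/-- Base adjacency of `G'`: the edges of `G`, together with the paths
`â^i — a^i_j — v₁` of length two. -/
def extRel {V : Type*} (G : SimpleGraph V) (v1 : V) {p q : ℕ} :
    ExtVert V p q → ExtVert V p q → Prop
  | .base v, .base w => G.Adj v w
  | .ahat i, .mid i' _ => i = i'
  | .mid _ _, .base v => v = v1
  | _, _ => False

/-- The graph `G'` obtained from `G` by adding, for each new vertex `â^i`, `q` internally
disjoint paths `â^i a^i_j v₁` of length two through new pairwise distinct vertices. -/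
def extGraph {V : Type*} (G : SimpleGraph V) (v1 : V) (p q : ℕ) :
    SimpleGraph (ExtVert V p q) :=
  SimpleGraph.fromRel (extRel G v1)

/-- The set `S' = {v₁, v₂, v₃, v₄, â^1, …, â^p}` inside `G'`. -/
def extS {V : Type*} (v1 v2 v3 v4 : V) (p q : ℕ) : Set (ExtVert V p q) :=
  (ExtVert.base '' {v1, v2, v3, v4}) ∪ Set.range ExtVert.ahat

/-- In a cycle, every vertex of the support has two distinct neighbors that
also lie in the support. -/
private lemma cycle_two_nbrs {W : Type*} {G : SimpleGraph W} {u a : W} {c : G.Walk a a}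
    (hc : c.IsCycle) (hu : u ∈ c.support) :
    ∃ y z, y ≠ z ∧ G.Adj u y ∧ G.Adj u z ∧ y ∈ c.support ∧ z ∈ c.support := by
  classical
  have hmem : ∀ w, w ∈ (c.rotate u hu).support → w ∈ c.support := by
    intro w hw
    rw [SimpleGraph.Walk.mem_support_iff] at hw
    rcases hw with rfl | hw
    · exact hu
    · exact List.mem_of_mem_tail (((c.support_rotate u hu).mem_iff).mp hw)
  have hc' := hc.rotate hu
  cases hrot : c.rotate u hu with
  | nil =>
    rw [hrot] at hc'
    exact absurd rfl hc'.ne_nil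
  | @cons _ w _ hadj p =>
    rw [hrot] at hc' hmem
    obtain ⟨x, h', q, hq⟩ := SimpleGraph.Walk.exists_eq_cons_of_ne hadj.ne p.reverse
    have hx : s(u, x) ∈ p.edges := by
      have h2 : s(u, x) ∈ p.reverse.edges := by
        rw [hq]
        exact List.mem_cons_self
      rwa [SimpleGraph.Walk.edges_reverse, List.mem_reverse] at h2
    have hxw : x ≠ w := by
      rintro rfl
      have hnd := hc'.isCircuit.isTrail.edges_nodup
      rw [SimpleGraph.Walk.edges_cons] at hnd
      exact (List.nodup_cons.mp hnd).1 hx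
    refine ⟨w, x, fun h => hxw h.symm, hadj, h', ?_, ?_⟩
    · refine hmem w ?_
      rw [SimpleGraph.Walk.support_cons]
      exact List.mem_cons_of_mem _ p.start_mem_support
    · refine hmem x ?_
      rw [SimpleGraph.Walk.support_cons]
      exact List.mem_cons_of_mem _ (p.snd_mem_support_of_mem_edges hx)

/-- Pull a walk back along an injective "reflecting" map. -/
private lemma walk_pull {W W' : Type*} {G : SimpleGraph W} {G' : SimpleGraph W'} (f : W → W')
    (hf : Function.Injective f)
    (hback : ∀ a b : W, G'.Adj (f a) (f b) → G.Adj a b) :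
    ∀ {u' v' : W'} (p : G'.Walk u' v'), (∀ w ∈ p.support, ∃ z, w = f z) →
      ∀ u v : W, u' = f u → v' = f v →
      ∃ q : G.Walk u v, p.support = q.support.map f ∧
        p.edges = q.edges.map (Sym2.map f) ∧ p.length = q.length := by
  intro u' v' p
  induction p with
  | nil =>
    intro _ u v hu hv
    obtain rfl : u = v := hf (hu ▸ hv)
    subst hu
    exact ⟨SimpleGraph.Walk.nil, by simp, by simp, by simp⟩
  | @cons a b c h p ih =>
    intro hall u v hu hv
    obtain ⟨w, hw⟩ : ∃ z, b = f z := by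
      refine hall b ?_
      rw [SimpleGraph.Walk.support_cons]
      exact List.mem_cons_of_mem _ p.start_mem_support
    have hadj : G.Adj u w := hback u w (by rw [← hu, ← hw]; exact h)
    obtain ⟨q, hs, he, hl⟩ := ih (fun x hx => hall x (by
      rw [SimpleGraph.Walk.support_cons]; exact List.mem_cons_of_mem _ hx)) w v hw hv
    refine ⟨SimpleGraph.Walk.cons hadj q, ?_, ?_, ?_⟩
    · rw [SimpleGraph.Walk.support_cons, SimpleGraph.Walk.support_cons, hs, hu, List.map_cons]
    · rw [SimpleGraph.Walk.edges_cons, SimpleGraph.Walk.edges_cons, he, hu, hw, List.map_cons,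
        Sym2.map_pair_eq]
    · simp [hl]

section Ext

variable {V : Type*} (G : SimpleGraph V) (v1 : V) (p q : ℕ)

/-- The subgraph of `G'` obtained from the subgraph `A` of `G` by attaching the paths
`v₁ — a^i_j — â^i` for all `i`, with the fixed middle index `j`. -/
def extSub (A : G.Subgraph) (hv1 : v1 ∈ A.verts) (j : Fin q) :
    (extGraph G v1 p q).Subgraph where
  verts := (ExtVert.base '' A.verts) ∪ Set.range ExtVert.ahat ∪
    Set.range (fun i => ExtVert.mid i j)
  Adj x y := (∃ a b, A.Adj a b ∧ x = ExtVert.base a ∧ y = ExtVert.base b) ∨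
    (∃ i, x = ExtVert.ahat i ∧ y = ExtVert.mid i j) ∨
    (∃ i, x = ExtVert.mid i j ∧ y = ExtVert.ahat i) ∨
    (∃ i, x = ExtVert.mid i j ∧ y = ExtVert.base v1) ∨
    (∃ i, x = ExtVert.base v1 ∧ y = ExtVert.mid i j)
  adj_sub := by
    rintro x y (⟨a, b, hab, rfl, rfl⟩ | ⟨i, rfl, rfl⟩ | ⟨i, rfl, rfl⟩ | ⟨i, rfl, rfl⟩ |
      ⟨i, rfl, rfl⟩)
    · have h := A.adj_sub hab
      simp only [extGraph, SimpleGraph.fromRel_adj, extRel]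
      exact ⟨by simp [h.ne], Or.inl h⟩
    all_goals simp [extGraph, extRel]
  edge_vert := by
    rintro x y (⟨a, b, hab, rfl, rfl⟩ | ⟨i, rfl, rfl⟩ | ⟨i, rfl, rfl⟩ | ⟨i, rfl, rfl⟩ |
      ⟨i, rfl, rfl⟩)
    · exact Or.inl (Or.inl ⟨a, A.edge_vert hab, rfl⟩)
    · exact Or.inl (Or.inr ⟨i, rfl⟩)
    · exact Or.inr ⟨i, rfl⟩
    · exact Or.inr ⟨i, rfl⟩
    · exact Or.inl (Or.inl ⟨v1, hv1, rfl⟩)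
  symm := by
    constructor
    rintro x y (⟨a, b, hab, rfl, rfl⟩ | ⟨i, rfl, rfl⟩ | ⟨i, rfl, rfl⟩ | ⟨i, rfl, rfl⟩ |
      ⟨i, rfl, rfl⟩)
    · exact Or.inl ⟨b, a, hab.symm, rfl, rfl⟩
    · exact Or.inr (Or.inr (Or.inl ⟨i, rfl, rfl⟩))
    · exact Or.inr (Or.inl ⟨i, rfl, rfl⟩)
    · exact Or.inr (Or.inr (Or.inr (Or.inr ⟨i, rfl, rfl⟩)))
    · exact Or.inr (Or.inr (Or.inr (Or.inl ⟨i, rfl, rfl⟩)))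

variable {G v1 p q}
variable {A : G.Subgraph} {hv1 : v1 ∈ A.verts} {j : Fin q}

lemma extSub_adj {x y : ExtVert V p q} :
    (extSub G v1 p q A hv1 j).Adj x y ↔
      (∃ a b, A.Adj a b ∧ x = ExtVert.base a ∧ y = ExtVert.base b) ∨
      (∃ i, x = ExtVert.ahat i ∧ y = ExtVert.mid i j) ∨
      (∃ i, x = ExtVert.mid i j ∧ y = ExtVert.ahat i) ∨
      (∃ i, x = ExtVert.mid i j ∧ y = ExtVert.base v1) ∨
      (∃ i, x = ExtVert.base v1 ∧ y = ExtVert.mid i j) := Iff.rfl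

lemma extSub_verts :
    (extSub G v1 p q A hv1 j).verts = (ExtVert.base '' A.verts) ∪ Set.range ExtVert.ahat ∪
      Set.range (fun i => ExtVert.mid i j) := rfl

lemma base_mem_extSub {z : V} (h : ExtVert.base z ∈ (extSub G v1 p q A hv1 j).verts) :
    z ∈ A.verts := by
  rcases h with (⟨a, ha, hae⟩ | ⟨i, hie⟩) | ⟨i, hie⟩
  · cases hae; exact ha
  · simp at hie
  · simp at hie

lemma adj_ahat {i : Fin p} {y : ExtVert V p q}
    (h : (extSub G v1 p q A hv1 j).Adj (ExtVert.ahat i) y) : y = ExtVert.mid i j := by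
  rcases h with ⟨a, b, hab, h1, h2⟩ | ⟨i', h1, h2⟩ | ⟨i', h1, h2⟩ | ⟨i', h1, h2⟩ | ⟨i', h1, h2⟩ <;>
    simp_all

lemma adj_mid {i : Fin p} {j' : Fin q} {y : ExtVert V p q}
    (h : (extSub G v1 p q A hv1 j).Adj (ExtVert.mid i j') y) :
    j' = j ∧ (y = ExtVert.ahat i ∨ y = ExtVert.base v1) := by
  rcases h with ⟨a, b, hab, h1, h2⟩ | ⟨i', h1, h2⟩ | ⟨i', h1, h2⟩ | ⟨i', h1, h2⟩ | ⟨i', h1, h2⟩ <;>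
    simp_all

lemma adj_base_base {a b : V}
    (h : (extSub G v1 p q A hv1 j).Adj (ExtVert.base a) (ExtVert.base b)) : A.Adj a b := by
  rcases h with ⟨a', b', hab, h1, h2⟩ | ⟨i', h1, h2⟩ | ⟨i', h1, h2⟩ | ⟨i', h1, h2⟩ | ⟨i', h1, h2⟩ <;>
    simp_all

/-- The extended subgraph is a tree if `A` is. -/
lemma extSub_isTree (hA : A.coe.IsTree) : (extSub G v1 p q A hv1 j).coe.IsTree := by
  set T : (extGraph G v1 p q).Subgraph := extSub G v1 p q A hv1 j with hT
  have hv1T : ExtVert.base v1 ∈ T.verts := Or.inl (Or.inl ⟨v1, hv1, rfl⟩)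
  have hmidT : ∀ i : Fin p, ExtVert.mid i j ∈ T.verts := fun i => Or.inr ⟨i, rfl⟩
  have hahatT : ∀ i : Fin p, ExtVert.ahat i ∈ T.verts := fun i => Or.inl (Or.inr ⟨i, rfl⟩)
  have hbaseT : ∀ z ∈ A.verts, ExtVert.base z ∈ T.verts := fun z hz => Or.inl (Or.inl ⟨z, hz, rfl⟩)
  constructor
  · -- connectivity
    have hr : ∀ w : T.verts, T.coe.Reachable w ⟨ExtVert.base v1, hv1T⟩ := by
      rintro ⟨w, hw⟩
      rcases hw with (⟨x, hx, rfl⟩ | ⟨i, rfl⟩) | ⟨i, rfl⟩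
      · exact SimpleGraph.Reachable.map
          ((⟨fun z => ⟨ExtVert.base z.1, hbaseT z.1 z.2⟩,
            fun {a b} hab => Or.inl ⟨a.1, b.1, hab, rfl, rfl⟩⟩ : A.coe →g T.coe))
          (hA.isConnected.preconnected ⟨x, hx⟩ ⟨v1, hv1⟩)
      · have h1 : T.coe.Adj ⟨ExtVert.ahat i, hahatT i⟩ ⟨ExtVert.mid i j, hmidT i⟩ :=
          Or.inr (Or.inl ⟨i, rfl, rfl⟩)
        have h2 : T.coe.Adj ⟨ExtVert.mid i j, hmidT i⟩ ⟨ExtVert.base v1, hv1T⟩ :=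
          Or.inr (Or.inr (Or.inr (Or.inl ⟨i, rfl, rfl⟩)))
        exact h1.reachable.trans h2.reachable
      · have h2 : T.coe.Adj ⟨ExtVert.mid i j, hmidT i⟩ ⟨ExtVert.base v1, hv1T⟩ :=
          Or.inr (Or.inr (Or.inr (Or.inl ⟨i, rfl, rfl⟩)))
        exact h2.reachable
    have : Nonempty T.verts := ⟨⟨ExtVert.base v1, hv1T⟩⟩
    exact ⟨fun x y => (hr x).trans (hr y).symm⟩
  · -- acyclicity
    intro u c hc
    have step1 : ∀ (w : T.verts), (∃ i, w.1 = ExtVert.ahat i) → w ∉ c.support := by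
      rintro ⟨w, hwT⟩ ⟨i, rfl⟩ hw
      obtain ⟨y, z, hyz, hy, hz, _, _⟩ := cycle_two_nbrs hc hw
      rw [SimpleGraph.Subgraph.coe_adj] at hy hz
      have hy' := adj_ahat hy
      have hz' := adj_ahat hz
      exact hyz (Subtype.ext (hy'.trans hz'.symm))
    have step2 : ∀ (w : T.verts), (∃ i j', w.1 = ExtVert.mid i j') → w ∉ c.support := by
      rintro ⟨w, hwT⟩ ⟨i, j', rfl⟩ hw
      obtain ⟨y, z, hyz, hy, hz, hys, hzs⟩ := cycle_two_nbrs hc hw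
      rw [SimpleGraph.Subgraph.coe_adj] at hy hz
      obtain ⟨rfl, hy'⟩ := adj_mid hy
      obtain ⟨-, hz'⟩ := adj_mid hz
      rcases hy' with hy' | hy' <;> rcases hz' with hz' | hz'
      · exact hyz (Subtype.ext (hy'.trans hz'.symm))
      · exact step1 y ⟨i, hy'⟩ hys
      · exact step1 z ⟨i, hz'⟩ hzs
      · exact hyz (Subtype.ext (hy'.trans hz'.symm))
    have step3 : ∀ w ∈ c.support, ∃ z : A.verts,
        w = (⟨ExtVert.base z.1, hbaseT z.1 z.2⟩ : T.verts) := by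
      intro w hw
      cases hwv : w.1 with
      | base z =>
        have hz : z ∈ A.verts := base_mem_extSub (by rw [← hwv]; exact w.2)
        exact ⟨⟨z, hz⟩, Subtype.ext hwv⟩
      | ahat i => exact absurd hw (step1 w ⟨i, hwv⟩)
      | mid i j' => exact absurd hw (step2 w ⟨i, j', hwv⟩)
    -- pull the cycle down to `A.coe`
    set f : A.verts → T.verts := fun z => ⟨ExtVert.base z.1, hbaseT z.1 z.2⟩ with hf
    have hfinj : Function.Injective f := by
      intro a b hab
      apply Subtype.ext
      have := congrArg Subtype.val hab
      simpa [hf] using this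
    have hback : ∀ a b : A.verts, T.coe.Adj (f a) (f b) → A.coe.Adj a b := by
      intro a b hab
      rw [SimpleGraph.Subgraph.coe_adj] at hab ⊢
      exact adj_base_base hab
    obtain ⟨x, hx⟩ := step3 u c.start_mem_support
    obtain ⟨qw, hs, he, hl⟩ := walk_pull f hfinj hback c step3 x x hx hx
    have hq : qw.IsCycle := by
      refine ⟨⟨⟨?_⟩, ?_⟩, ?_⟩
      · have := hc.isCircuit.isTrail.edges_nodup
        rw [he] at this
        exact this.of_map _
      · intro hnil
        apply hc.ne_nil
        have : c.length = 0 := by rw [hl, hnil]; rfl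
        exact (SimpleGraph.Walk.nil_iff_length_eq.mpr this).eq_nil
      · have := hc.support_nodup
        rw [hs, ← List.map_tail] at this
        exact this.of_map _
    exact hA.IsAcyclic qw hq

end Ext

/-- If `G` contains `k₂` internally disjoint trees connecting `S = {v₁,v₂,v₃,v₄}`,
then `G'` contains `k₂` internally disjoint trees connecting
`S' = S ∪ {â^1, …, â^{k₁-4}}`. -/
theorem ext_trees_of_trees {V : Type*} (G : SimpleGraph V) (v1 v2 v3 v4 : V)
    (h12 : v1 ≠ v2) (h13 : v1 ≠ v3) (h14 : v1 ≠ v4)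
    (h23 : v2 ≠ v3) (h24 : v2 ≠ v4) (h34 : v3 ≠ v4)
    (k1 k2 : ℕ) (hk1 : 5 ≤ k1) (hk2 : 2 ≤ k2)
    (F : Fin k2 → G.Subgraph) (hF : IsIDTrees G ({v1, v2, v3, v4} : Set V) F) :
    ∃ F' : Fin k2 → (extGraph G v1 (k1 - 4) k2).Subgraph,
      IsIDTrees (extGraph G v1 (k1 - 4) k2) (extS v1 v2 v3 v4 (k1 - 4) k2) F' := by
  have hv1 : ∀ j : Fin k2, v1 ∈ (F j).verts := fun j => (hF.1 j).1 (by simp)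
  refine ⟨fun j => extSub G v1 (k1 - 4) k2 (F j) (hv1 j) j, ?_, ?_⟩
  · intro j
    constructor
    · rintro x ((⟨y, hy, rfl⟩ : _ ∈ ExtVert.base '' _) | (⟨i, rfl⟩ : _ ∈ Set.range _))
      · exact Or.inl (Or.inl ⟨y, (hF.1 j).1 hy, rfl⟩)
      · exact Or.inl (Or.inr ⟨i, rfl⟩)
    · exact extSub_isTree (hF.1 j).2
  · intro j j' hjj'
    obtain ⟨hverts, hedges⟩ := hF.2 j j' hjj'
    constructor
    · -- vertex intersection
      ext x
      show x ∈ _ ∩ _ ↔ _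
      simp only [extSub_verts, extS, Set.mem_inter_iff, Set.mem_union, Set.mem_image,
        Set.mem_range]
      constructor
      · rintro ⟨(⟨a, ha, rfl⟩ | ⟨i, rfl⟩) | ⟨i, rfl⟩, (⟨b, hb, hbe⟩ | ⟨i', hie⟩) | ⟨i', hie⟩⟩
        · obtain rfl : b = a := by simpa using hbe
          exact Or.inl ⟨_, by rw [← hverts]; exact ⟨ha, hb⟩, rfl⟩
        · exact absurd hie (by simp)
        · exact absurd hie (by simp)
        · exact absurd hbe (by simp)
        · exact Or.inr ⟨i, rfl⟩
        · exact absurd hie (by simp)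
        · exact absurd hbe (by simp)
        · exact absurd hie (by simp)
        · obtain ⟨-, h2⟩ : i' = i ∧ j' = j := by simpa using hie
          exact absurd h2 (Ne.symm hjj')
      · rintro (⟨a, ha, rfl⟩ | ⟨i, rfl⟩)
        · have haj : a ∈ (F j).verts ∩ (F j').verts := by rw [hverts]; exact ha
          exact ⟨Or.inl (Or.inl ⟨a, haj.1, rfl⟩), Or.inl (Or.inl ⟨a, haj.2, rfl⟩)⟩
        · exact ⟨Or.inl (Or.inr ⟨i, rfl⟩), Or.inl (Or.inr ⟨i, rfl⟩)⟩
    · -- edge disjointness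
      rw [Set.disjoint_left]
      intro e he1 he2
      induction e with
      | h x y =>
        rw [SimpleGraph.Subgraph.mem_edgeSet] at he1 he2
        rcases he1 with ⟨a, b, hab, rfl, rfl⟩ | ⟨i, rfl, rfl⟩ | ⟨i, rfl, rfl⟩ | ⟨i, rfl, rfl⟩ |
          ⟨i, rfl, rfl⟩ <;>
          rcases he2 with ⟨a', b', hab', h1, h2⟩ | ⟨i', h1, h2⟩ | ⟨i', h1, h2⟩ | ⟨i', h1, h2⟩ |
            ⟨i', h1, h2⟩ <;>
          simp_all
        · exact Set.disjoint_left.mp hedges (SimpleGraph.Subgraph.mem_edgeSet.mpr hab)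
            (SimpleGraph.Subgraph.mem_edgeSet.mpr hab')
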